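/- The Loewner inequality (M̂^⊤M̂)⁻¹ ⪯ A^⊤(X^⊤X)⁻¹A holds; that is, A^⊤(X^⊤X)⁻¹A − ((A(A^⊤A)⁻¹)^⊤X^⊤X A(A^⊤A)⁻¹)⁻¹ is positive semidefinite. -/

import Mathlib

open Matrix

lemma aux_posDef {n : ℕ} {S : Matrix (Fin n) (Fin n) ℝ} (hS : S.PosSemidef)
    (hU : IsUnit S) : S.PosDef := by
  refine posDef_iff_dotProduct_mulVec.mpr ⟨hS.1, fun x hx => ?_⟩
  rcases ((posSemidef_iff_dotProduct_mulVec.mp hS).2 x).lt_or_eq with h | h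
  · exact h
  · exfalso
    apply hx
    have h0 : S *ᵥ x = 0 := (hS.dotProduct_mulVec_zero_iff x).mp h.symm
    have : x = S⁻¹ *ᵥ (S *ᵥ x) := by
      rw [mulVec_mulVec, Matrix.nonsing_inv_mul _ ((Matrix.isUnit_iff_isUnit_det S).mp hU),
        one_mulVec]
    rw [this, h0, mulVec_zero]

theorem stmt_10 (p n K : ℕ) (hK : 0 < K) (hKn : K ≤ n) (hnp : n < p)
    (X : Matrix (Fin p) (Fin n) ℝ) (A : Matrix (Fin n) (Fin K) ℝ)
    (hX : IsUnit (Xᵀ * X)) (hA : IsUnit (Aᵀ * A)) :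
    (Aᵀ * (Xᵀ * X)⁻¹ * A
      - ((A * (Aᵀ * A)⁻¹)ᵀ * (Xᵀ * X) * (A * (Aᵀ * A)⁻¹))⁻¹).PosSemidef := by
  set S := Xᵀ * X with hSdef
  set B := A * (Aᵀ * A)⁻¹ with hBdef
  have hS : S.PosSemidef := by
    have := posSemidef_conjTranspose_mul_self X
    simpa using this
  have hSpd : S.PosDef := aux_posDef hS hX
  have hSsymm : Sᵀ = S := hSpd.isHermitian.eq
  have hAdet : IsUnit (Aᵀ * A).det := (Matrix.isUnit_iff_isUnit_det _).mp hA
  have hAAsymm : (Aᵀ * A)ᵀ = Aᵀ * A := by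
    rw [Matrix.transpose_mul, Matrix.transpose_transpose]
  have hBt : Bᵀ = (Aᵀ * A)⁻¹ * Aᵀ := by
    rw [hBdef, Matrix.transpose_mul, Matrix.transpose_nonsing_inv, hAAsymm]
  have hBA : Bᵀ * A = 1 := by
    rw [hBt, Matrix.mul_assoc, Matrix.nonsing_inv_mul _ hAdet]
  have hAB : Aᵀ * B = 1 := by
    rw [hBdef, ← Matrix.mul_assoc, Matrix.mul_nonsing_inv _ hAdet]
  set C := Bᵀ * S * B with hCdef
  have hCsymm : Cᵀ = C := by
    rw [hCdef]
    simp only [Matrix.transpose_mul, Matrix.transpose_transpose, hSsymm, Matrix.mul_assoc]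
  have hCpd : C.PosDef := by
    refine posDef_iff_dotProduct_mulVec.mpr ⟨by simpa [Matrix.IsHermitian] using hCsymm, fun x hx => ?_⟩
    have hBx : B *ᵥ x ≠ 0 := by
      intro h0
      apply hx
      have : Aᵀ *ᵥ (B *ᵥ x) = x := by
        rw [mulVec_mulVec, hAB, one_mulVec]
      rw [← this, h0, mulVec_zero]
    have := hSpd.dotProduct_mulVec_pos hBx
    simpa [hCdef, ← mulVec_mulVec, dotProduct_mulVec, vecMul_transpose,
      Matrix.dotProduct_mulVec] using this
  have hCdet : IsUnit C.det := (Matrix.isUnit_iff_isUnit_det _).mp hCpd.isUnit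
  have hSdet : IsUnit S.det := (Matrix.isUnit_iff_isUnit_det _).mp hX
  have hCinvsymm : C⁻¹ᵀ = C⁻¹ := by
    rw [Matrix.transpose_nonsing_inv, hCsymm]
  set M := A - S * B * C⁻¹ with hMdef
  have key : Mᵀ * S⁻¹ * M = Aᵀ * S⁻¹ * A - C⁻¹ := by
    have e1 : ∀ Y : Matrix (Fin n) (Fin K) ℝ, S⁻¹ * (S * Y) = Y := fun Y => by
      rw [← Matrix.mul_assoc, Matrix.nonsing_inv_mul _ hSdet, Matrix.one_mul]
    have e2 : ∀ Y : Matrix (Fin n) (Fin K) ℝ, S * (S⁻¹ * Y) = Y := fun Y => by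
      rw [← Matrix.mul_assoc, Matrix.mul_nonsing_inv _ hSdet, Matrix.one_mul]
    have e4 : C * C⁻¹ = 1 := Matrix.mul_nonsing_inv _ hCdet
    rw [hMdef]
    simp only [Matrix.transpose_sub, Matrix.transpose_mul, hCinvsymm, hSsymm,
      Matrix.sub_mul, Matrix.mul_sub, Matrix.mul_assoc]
    rw [e1, e2, hBA, Matrix.mul_one,
      show Aᵀ * (B * C⁻¹) = (Aᵀ * B) * C⁻¹ from (Matrix.mul_assoc _ _ _).symm, hAB,
      Matrix.one_mul,
      show Bᵀ * (S * (B * C⁻¹)) = (Bᵀ * S * B) * C⁻¹ by simp only [Matrix.mul_assoc],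
      ← hCdef, e4, Matrix.mul_one]
    abel
  rw [key.symm]
  have := hS.inv.conjTranspose_mul_mul_same M
  simpa using this
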